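/- Let M, N be positive integers, A ∈ ℂ^{M×N}, and suppose every eigenvalue of the Hermitian positive semidefinite matrix A·Aᴴ lies in [λmin, λmax], where 0 ≤ λmin ≤ λmax. Set λ† = (λmax + λmin)/2, B = λ†·I_M − A·Aᴴ, b_k = (1/N)·tr(Bᵏ), w_k = λ†·b_k − b_{k+1}, and, for σ² > 0, θ₀ = (λ† + σ²)⁻¹ and χ_k = θ₀ᵏ·w_k. Then for every natural number k, |χ_k| ≤ (M/N)·(λ† + θ₀⁻¹). (Lemma 2 of the paper.) -/

import Mathlib

open Matrix

/-- Lemma 2 of the paper: the rescaled coefficients `χ_k = θ₀ᵏ · w_k` are bounded,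
so computing them carries no risk of overflow. -/
theorem oa_gd_mamp_chi_bound
    (M N : ℕ) (hM : 0 < M) (hN : 0 < N)
    (A : Matrix (Fin M) (Fin N) ℂ)
    (lmin lmax : ℝ) (hlmin : 0 ≤ lmin) (hle : lmin ≤ lmax)
    (hH : (A * Aᴴ).IsHermitian)
    (heig : ∀ i, lmin ≤ hH.eigenvalues i ∧ hH.eigenvalues i ≤ lmax)
    (σ2 : ℝ) (hσ2 : 0 < σ2)
    (ld θ0 : ℝ)
    (hld : ld = (lmax + lmin) / 2)
    (hθ0 : θ0 = (ld + σ2)⁻¹)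
    (B : Matrix (Fin M) (Fin M) ℂ)
    (hB : B = (ld : ℂ) • (1 : Matrix (Fin M) (Fin M) ℂ) - A * Aᴴ)
    (b w χ : ℕ → ℂ)
    (hb : ∀ k, b k = (1 / (N : ℂ)) * Matrix.trace (B ^ k))
    (hw : ∀ k, w k = (ld : ℂ) * b k - b (k + 1))
    (hχ : ∀ k, χ k = (θ0 : ℂ) ^ k * w k) :
    ∀ k : ℕ, ‖χ k‖ ≤ ((M : ℝ) / (N : ℝ)) * (ld + θ0⁻¹) := by
  intro k
  set eig : Fin M → ℝ := hH.eigenvalues with heigdef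
  set U : Matrix (Fin M) (Fin M) ℂ := (hH.eigenvectorUnitary : Matrix (Fin M) (Fin M) ℂ) with hUdef
  have hU1 : U * star U = 1 := (Matrix.mem_unitaryGroup_iff).mp hH.eigenvectorUnitary.2
  have hU2 : star U * U = 1 := (Matrix.mem_unitaryGroup_iff').mp hH.eigenvectorUnitary.2
  set μ : Fin M → ℂ := fun i => ((ld - eig i : ℝ) : ℂ) with hμdef
  have hd : Matrix.diagonal μ
      = (ld : ℂ) • (1 : Matrix (Fin M) (Fin M) ℂ)
        - Matrix.diagonal (RCLike.ofReal ∘ hH.eigenvalues) := by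
    ext i j
    by_cases h : i = j <;> simp [hμdef, heigdef, Matrix.diagonal, h, Matrix.one_apply]
  have hBdiag : B = U * Matrix.diagonal μ * star U := by
    rw [hd, Matrix.mul_sub, Matrix.sub_mul, mul_smul_comm, mul_one, smul_mul_assoc, hU1, hB]
    congr 1
    exact hH.spectral_theorem
  have hBpow : ∀ m : ℕ, B ^ m = U * Matrix.diagonal (μ ^ m) * star U := by
    have key : ∀ m : ℕ, B ^ m = U * (Matrix.diagonal μ) ^ m * star U := by
      intro m
      induction m with
      | zero => simp [hU1]
      | succ n ih =>
          rw [pow_succ, ih, hBdiag]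
          simp only [Matrix.mul_assoc]
          rw [← Matrix.mul_assoc (star U) U, hU2, Matrix.one_mul,
            ← Matrix.mul_assoc ((Matrix.diagonal μ) ^ n), ← pow_succ]
    intro m
    rw [key m, Matrix.diagonal_pow]
  have htr : ∀ m : ℕ, Matrix.trace (B ^ m) = ∑ i, (μ i) ^ m := by
    intro m
    rw [hBpow m, Matrix.trace_mul_cycle, hU2, Matrix.one_mul, Matrix.trace_diagonal]
    simp [Pi.pow_apply]
  have hχr : χ k
      = (((1 / (N : ℝ)) * ∑ i, θ0 ^ k * ((ld - eig i) ^ k * eig i) : ℝ) : ℂ) := by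
    rw [hχ, hw, hb, hb, htr, htr]
    simp only [hμdef]
    push_cast
    simp only [Finset.mul_sum, ← Finset.sum_sub_distrib, pow_succ]
    refine Finset.sum_congr rfl fun i _ => ?_
    ring
  have hld0 : 0 ≤ ld := by rw [hld]; linarith
  have hpos : 0 < ld + σ2 := by linarith
  have hθpos : 0 < θ0 := by rw [hθ0]; positivity
  have hθinv : θ0⁻¹ = ld + σ2 := by rw [hθ0, inv_inv]
  have hpb : ∀ i : Fin M, |θ0 ^ k * ((ld - eig i) ^ k * eig i)| ≤ lmax := by
    intro i
    obtain ⟨h1, h2⟩ := heig i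
    have he0 : 0 ≤ eig i := le_trans hlmin h1
    have habs : |ld - eig i| ≤ ld := by
      rw [abs_le]; constructor <;> linarith
    have hθm : θ0 * |ld - eig i| ≤ 1 := by
      have h3 : θ0 * |ld - eig i| ≤ θ0 * (ld + σ2) :=
        mul_le_mul_of_nonneg_left (by linarith) hθpos.le
      have h4 : θ0 * (ld + σ2) = 1 := by rw [hθ0]; field_simp
      linarith
    calc |θ0 ^ k * ((ld - eig i) ^ k * eig i)|
        = (θ0 * |ld - eig i|) ^ k * eig i := by
          rw [abs_mul, abs_mul, abs_pow, abs_pow, abs_of_pos hθpos, abs_of_nonneg he0, mul_pow]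
          ring
      _ ≤ 1 ^ k * lmax := by
          apply mul_le_mul (pow_le_pow_left₀ (by positivity) hθm k) h2 he0 (by positivity)
      _ = lmax := by simp
  rw [hχr, Complex.norm_real, Real.norm_eq_abs]
  have hsum : |∑ i, θ0 ^ k * ((ld - eig i) ^ k * eig i)| ≤ (M : ℝ) * lmax := by
    calc |∑ i, θ0 ^ k * ((ld - eig i) ^ k * eig i)|
        ≤ ∑ i, |θ0 ^ k * ((ld - eig i) ^ k * eig i)| := Finset.abs_sum_le_sum_abs _ _
      _ ≤ ∑ _i : Fin M, lmax := Finset.sum_le_sum fun i _ => hpb i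
      _ = (M : ℝ) * lmax := by simp [Finset.sum_const, nsmul_eq_mul]
  have hN0 : (0:ℝ) < N := by exact_mod_cast hN
  calc |1 / (N:ℝ) * ∑ i, θ0 ^ k * ((ld - eig i) ^ k * eig i)|
      = 1 / (N:ℝ) * |∑ i, θ0 ^ k * ((ld - eig i) ^ k * eig i)| := by
        rw [abs_mul, abs_of_nonneg (by positivity)]
    _ ≤ 1 / (N:ℝ) * ((M:ℝ) * lmax) := mul_le_mul_of_nonneg_left hsum (by positivity)
    _ = ((M:ℝ) / (N:ℝ)) * lmax := by ring
    _ ≤ ((M:ℝ) / (N:ℝ)) * (ld + θ0⁻¹) := by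
        apply mul_le_mul_of_nonneg_left _ (by positivity)
        rw [hθinv, hld]; linarith
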